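/- If a graph G contains an independent set S of size k, then every symmetric n×n real matrix M with M_{ij} = 1 for all non-adjacent pairs (i,j) (including i = j) has largest eigenvalue at least k. -/

import Mathlib

open scoped Matrix


/-- If a graph `G` on `n` vertices contains an independent set `S` of size `k`,
then every symmetric real `n × n` matrix `M` with `M i j = 1` for all
non-adjacent pairs (including the diagonal) has largest eigenvalue at least `k`. -/
theorem eigenvalue_ge_of_indepSet {n k : ℕ} (hn : 0 < n) (G : SimpleGraph (Fin n))
    (S : Finset (Fin n)) (hindep : ∀ u ∈ S, ∀ v ∈ S, ¬ G.Adj u v) (hcard : S.card = k)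
    (M : Matrix (Fin n) (Fin n) ℝ) (hsym : M.IsHermitian)
    (hM : ∀ i j, ¬ G.Adj i j → M i j = 1) :
    ∃ i : Fin n, (k : ℝ) ≤ hsym.eigenvalues i := by
  classical
  haveI : Nonempty (Fin n) := Fin.pos_iff_nonempty.mp hn
  obtain ⟨i0, hi0⟩ := Finite.exists_max hsym.eigenvalues
  refine ⟨i0, ?_⟩
  set U : Matrix (Fin n) (Fin n) ℝ := (hsym.eigenvectorUnitary : Matrix (Fin n) (Fin n) ℝ)
  have hUU : U * star U = 1 := Unitary.coe_mul_star_self _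
  have hUsU : star U * U = 1 := Unitary.coe_star_mul_self _
  -- indicator vector of S
  set x : Fin n → ℝ := fun i => if i ∈ S then 1 else 0 with hx
  set y : Fin n → ℝ := star U *ᵥ x with hy
  -- M entries on S × S are 1
  have hMS : ∀ i ∈ S, ∀ j ∈ S, M i j = 1 := by
    intro i hi j hj
    by_cases hij : i = j
    · subst hij; exact hM i i (G.loopless.irrefl i)
    · exact hM i j (hindep i hi j hj)
  -- quadratic form value
  have hquad : x ⬝ᵥ (M *ᵥ x) = (k : ℝ) ^ 2 := by
    have : x ⬝ᵥ (M *ᵥ x) = ∑ i ∈ S, ∑ j ∈ S, M i j := by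
      simp only [dotProduct, Matrix.mulVec, dotProduct, hx]
      simp [ite_mul, mul_ite, Finset.sum_ite_mem]
    rw [this, Finset.sum_congr rfl fun i hi => Finset.sum_congr rfl fun j hj => hMS i hi j hj]
    simp [hcard]; ring
  -- algebraic setup
  have hstar : star U = Uᵀ := by
    rw [Matrix.star_eq_conjTranspose]
    ext i j; simp [Matrix.conjTranspose_apply]
  have hUy : U *ᵥ y = x := by
    rw [hy, Matrix.mulVec_mulVec, hUU, Matrix.one_mulVec]
  have hxx : x ⬝ᵥ x = (k : ℝ) := by
    simp [hx, dotProduct, Finset.sum_ite_mem, hcard]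
  have hyy : y ⬝ᵥ y = (k : ℝ) := by
    have h1 : y = Matrix.vecMul x U := by
      rw [hy, hstar, Matrix.mulVec_transpose]
    calc y ⬝ᵥ y = Matrix.vecMul x U ⬝ᵥ y := by rw [← h1]
      _ = x ⬝ᵥ (U *ᵥ y) := (Matrix.dotProduct_mulVec x U y).symm
      _ = (k : ℝ) := by rw [hUy, hxx]
  have hofReal : (RCLike.ofReal ∘ hsym.eigenvalues : Fin n → ℝ) = hsym.eigenvalues := by
    funext i; simp
  have hq2 : x ⬝ᵥ (M *ᵥ x) = ∑ i, hsym.eigenvalues i * (y i) ^ 2 := by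
    conv_lhs => rw [hsym.spectral_theorem, Unitary.conjStarAlgAut_apply, hofReal]
    rw [← Matrix.mulVec_mulVec, ← Matrix.mulVec_mulVec, ← hy,
      Matrix.dotProduct_mulVec x U, ← Matrix.mulVec_transpose, ← hstar, ← hy]
    simp only [dotProduct, Matrix.mulVec_diagonal]
    exact Finset.sum_congr rfl fun i _ => by ring
  have hbound : x ⬝ᵥ (M *ᵥ x) ≤ hsym.eigenvalues i0 * (k : ℝ) := by
    rw [hq2]
    calc ∑ i, hsym.eigenvalues i * (y i) ^ 2
        ≤ ∑ i, hsym.eigenvalues i0 * (y i) ^ 2 :=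
          Finset.sum_le_sum fun i _ => mul_le_mul_of_nonneg_right (hi0 i) (sq_nonneg _)
      _ = hsym.eigenvalues i0 * (y ⬝ᵥ y) := by
          rw [← Finset.mul_sum]; congr 1
          simp only [dotProduct]
          exact Finset.sum_congr rfl fun i _ => pow_two (y i)
      _ = hsym.eigenvalues i0 * (k : ℝ) := by rw [hyy]
  rcases Nat.eq_zero_or_pos k with hk | hk
  · -- trace argument: sum of eigenvalues equals n > 0
    subst hk
    have htr : ∑ i, hsym.eigenvalues i = (n : ℝ) := by
      have h1 : M.trace = (n : ℝ) := by
        simp only [Matrix.trace, Matrix.diag]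
        rw [Finset.sum_congr rfl fun i _ => hM i i (G.loopless.irrefl i)]
        simp
      have h2 : M.trace = ∑ i, hsym.eigenvalues i := by
        conv_lhs => rw [hsym.spectral_theorem, Unitary.conjStarAlgAut_apply, hofReal]
        rw [Matrix.trace_mul_cycle, hUsU, one_mul, Matrix.trace_diagonal]
      rw [← h2, h1]
    by_contra hneg
    push_neg at hneg
    have : ∑ i, hsym.eigenvalues i < 0 := by
      have : ∀ i : Fin n, hsym.eigenvalues i < 0 := fun i =>
        lt_of_le_of_lt (hi0 i) (by simpa using hneg)
      calc ∑ i, hsym.eigenvalues i < ∑ _i : Fin n, (0:ℝ) :=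
            Finset.sum_lt_sum_of_nonempty Finset.univ_nonempty fun i _ => this i
        _ = 0 := by simp
    rw [htr] at this
    have hn0 : (0:ℝ) ≤ (n:ℝ) := Nat.cast_nonneg n
    linarith
  · have hk' : (0 : ℝ) < (k : ℝ) := by exact_mod_cast hk
    have : (k : ℝ) * (k : ℝ) ≤ hsym.eigenvalues i0 * (k : ℝ) := by
      rw [← sq]; rw [hquad] at hbound; exact hbound
    exact le_of_mul_le_mul_right this hk'
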